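/- Let p > 0 with 2/p ∈ ℕ, ω ≥ 0, γ > 0, φ ∈ [0,2π), and r > 0. Then 𝒥_{ω+γ,φ}^{[p]}(r) = (r^γ/(p^{γ−1}Γ(γ))) · ∫₀¹ 𝒥_{ω,φ}^{[p]}(τr)·τ^{(p−1)ω+1}·(1−τ^p)^{γ−1} dτ. -/

import Mathlib

/-- The one-variable generalized Bessel function `𝒥_{ω,φ}^{[p]}(r)`, via its series. -/
noncomputable def calJ (p ω φ r : ℝ) : ℝ :=
  ((2 / p) ^ 2 / Real.Gamma (1 / p) ^ 2) *
    ∑' k : ℕ, (p ^ (2 * k) * (-1 : ℝ) ^ k / Real.Gamma ((2 / p) * ((k : ℝ) + 1) + ω)) *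
      (r / p) ^ (2 * (k : ℝ) + ω) *
      ∑ n ∈ Finset.range (k + 1),
        Real.Gamma ((2 * (n : ℝ) + 1) / p) * Real.Gamma ((2 * ((k - n : ℕ) : ℝ) + 1) / p) /
            ((Nat.factorial (2 * n) : ℝ) * (Nat.factorial (2 * (k - n)) : ℝ)) *
          (|Real.cos φ| ^ (4 * (n : ℝ) / p) * |Real.sin φ| ^ (4 * ((k - n : ℕ) : ℝ) / p))

open MeasureTheory Real Set

lemma betaAux_eq (a b : ℝ) {x : ℝ} (hx : x ∈ Set.Icc (0:ℝ) 1) :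
    (x:ℂ) ^ ((a:ℂ)-1) * ((1:ℂ)-(x:ℂ)) ^ ((b:ℂ)-1)
      = ((x ^ (a-1) * (1-x) ^ (b-1) : ℝ) : ℂ) := by
  obtain ⟨h0, h1⟩ := hx
  have e1 : ((x ^ (a-1) : ℝ) : ℂ) = (x:ℂ) ^ ((a:ℂ)-1) := by
    rw [Complex.ofReal_cpow h0]
    push_cast
    ring_nf
  have e2 : (((1-x) ^ (b-1) : ℝ) : ℂ) = ((1:ℂ)-(x:ℂ)) ^ ((b:ℂ)-1) := by
    rw [Complex.ofReal_cpow (by linarith)]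
    push_cast
    ring_nf
  push_cast
  rw [e1, e2]

lemma beta_integrableOn {a b : ℝ} (ha : 0 < a) (hb : 0 < b) :
    IntegrableOn (fun x => x ^ (a-1) * (1-x) ^ (b-1)) (Set.Ioc (0:ℝ) 1) := by
  have hI := Complex.betaIntegral_convergent (u := (a:ℂ)) (v := (b:ℂ))
    (by simpa using ha) (by simpa using hb)
  rw [intervalIntegrable_iff_integrableOn_Ioc_of_le zero_le_one] at hI
  have := hI.re
  refine (IntegrableOn.congr_fun this ?_ measurableSet_Ioc)
  intro x hx
  have := betaAux_eq a b (Ioc_subset_Icc_self hx)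
  simp only []; rw [this]; exact Complex.ofReal_re _

lemma beta_integral_eq {a b : ℝ} (ha : 0 < a) (hb : 0 < b) :
    ∫ x in Set.Ioc (0:ℝ) 1, x ^ (a-1) * (1-x) ^ (b-1)
      = Real.Gamma a * Real.Gamma b / Real.Gamma (a+b) := by
  have key := Complex.Gamma_mul_Gamma_eq_betaIntegral (s := (a:ℂ)) (t := (b:ℂ))
    (by simpa using ha) (by simpa using hb)
  have hbeta : Complex.betaIntegral (a:ℂ) (b:ℂ)
      = ((∫ x in Set.Ioc (0:ℝ) 1, x ^ (a-1) * (1-x) ^ (b-1) : ℝ) : ℂ) := by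
    rw [Complex.betaIntegral]
    rw [← intervalIntegral.integral_of_le zero_le_one, ← intervalIntegral.integral_ofReal]
    refine intervalIntegral.integral_congr ?_
    intro x hx
    rw [Set.uIcc_of_le zero_le_one] at hx
    exact betaAux_eq a b hx
  rw [hbeta, ← Complex.ofReal_add, Complex.Gamma_ofReal, Complex.Gamma_ofReal,
    Complex.Gamma_ofReal, ← Complex.ofReal_mul, ← Complex.ofReal_mul] at key
  have := Complex.ofReal_inj.mp key
  have hpos : Real.Gamma (a+b) ≠ 0 := (Real.Gamma_pos_of_pos (by linarith)).ne'
  field_simp [this]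
  rw [this]; ring

lemma rpow_image_Ioc {p : ℝ} (hp : 0 < p) :
    (fun t : ℝ => t ^ p) '' Set.Ioc 0 1 = Set.Ioc (0:ℝ) 1 := by
  ext u
  constructor
  · rintro ⟨t, ⟨ht0, ht1⟩, rfl⟩
    exact ⟨Real.rpow_pos_of_pos ht0 p, Real.rpow_le_one ht0.le ht1 hp.le⟩
  · rintro ⟨hu0, hu1⟩
    refine ⟨u ^ (1/p), ⟨Real.rpow_pos_of_pos hu0 _, Real.rpow_le_one hu0.le hu1 (by positivity)⟩, ?_⟩
    show (u ^ (1/p)) ^ p = u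
    rw [← Real.rpow_mul hu0.le, one_div_mul_cancel hp.ne', Real.rpow_one]

lemma rpow_injOn_Ioc {p : ℝ} (hp : 0 < p) :
    Set.InjOn (fun t : ℝ => t ^ p) (Set.Ioc 0 1) :=
  StrictMonoOn.injOn (fun x hx y _ h => Real.rpow_lt_rpow hx.1.le h hp)

lemma rpow_hasDeriv_Ioc {p : ℝ} {t : ℝ} (ht : t ∈ Set.Ioc (0:ℝ) 1) :
    HasDerivWithinAt (fun t : ℝ => t ^ p) (p * t ^ (p-1)) (Set.Ioc 0 1) t := by
  have := Real.hasDerivAt_rpow_const (x := t) (p := p) (Or.inl ht.1.ne')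
  simpa [mul_comm] using this.hasDerivWithinAt

lemma subst_integral {p : ℝ} (hp : 0 < p) (g : ℝ → ℝ) :
    ∫ t in Set.Ioc (0:ℝ) 1, |p * t ^ (p-1)| * g (t ^ p)
      = ∫ u in Set.Ioc (0:ℝ) 1, g u := by
  have := integral_image_eq_integral_abs_deriv_smul measurableSet_Ioc
    (fun t ht => rpow_hasDeriv_Ioc ht) (rpow_injOn_Ioc hp) g
  rw [rpow_image_Ioc hp] at this
  rw [this]
  simp [smul_eq_mul]

lemma subst_integrable {p : ℝ} (hp : 0 < p) {g : ℝ → ℝ}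
    (hg : IntegrableOn g (Set.Ioc (0:ℝ) 1)) :
    IntegrableOn (fun t => |p * t ^ (p-1)| * g (t ^ p)) (Set.Ioc (0:ℝ) 1) := by
  have := (integrableOn_image_iff_integrableOn_abs_deriv_smul measurableSet_Ioc
    (fun t ht => rpow_hasDeriv_Ioc ht) (rpow_injOn_Ioc hp) g)
  rw [rpow_image_Ioc hp] at this
  simpa [smul_eq_mul] using this.mp hg

lemma key_eqOn {p a b : ℝ} (hp : 0 < p) {t : ℝ} (ht : t ∈ Set.Ioc (0:ℝ) 1) :
    |p * t ^ (p-1)| * ((t^p) ^ (a-1) * (1-t^p) ^ (b-1))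
      = p * (t ^ (p*a-1) * (1-t^p) ^ (b-1)) := by
  have ht0 := ht.1
  rw [abs_of_pos (by positivity : (0:ℝ) < p * t ^ (p-1)), ← Real.rpow_mul ht.1.le]
  have e : t ^ (p*a-1) = t ^ (p-1) * t ^ (p*(a-1)) := by
    rw [← Real.rpow_add ht.1]; ring_nf
  rw [e]; ring

lemma rpow_beta_integral {p a b : ℝ} (hp : 0 < p) (ha : 0 < a) (hb : 0 < b) :
    ∫ t in Set.Ioc (0:ℝ) 1, t ^ (p*a-1) * (1-t^p) ^ (b-1)
      = Real.Gamma a * Real.Gamma b / (p * Real.Gamma (a+b)) := by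
  have h1 : ∫ t in Set.Ioc (0:ℝ) 1, |p * t ^ (p-1)| * ((t^p) ^ (a-1) * (1-t^p) ^ (b-1))
      = Real.Gamma a * Real.Gamma b / Real.Gamma (a+b) := by
    rw [subst_integral hp (fun u => u ^ (a-1) * (1-u) ^ (b-1)), beta_integral_eq ha hb]
  rw [setIntegral_congr_fun measurableSet_Ioc (fun t ht => key_eqOn hp ht)] at h1
  rw [MeasureTheory.integral_const_mul] at h1
  field_simp at h1 ⊢
  linarith [h1]

lemma rpow_beta_integrableOn {p a b : ℝ} (hp : 0 < p) (ha : 0 < a) (hb : 0 < b) :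
    IntegrableOn (fun t => t ^ (p*a-1) * (1-t^p) ^ (b-1)) (Set.Ioc (0:ℝ) 1) := by
  have h := subst_integrable hp (beta_integrableOn ha hb)
  have h2 : IntegrableOn (fun t => p * (t ^ (p*a-1) * (1-t^p) ^ (b-1))) (Set.Ioc (0:ℝ) 1) :=
    h.congr_fun (fun t ht => key_eqOn hp ht) measurableSet_Ioc
  have h3 : IntegrableOn (fun t => (1/p) * (p * (t ^ (p*a-1) * (1-t^p) ^ (b-1))))
      (Set.Ioc (0:ℝ) 1) := h2.const_mul (1/p)
  refine MeasureTheory.IntegrableOn.congr_fun h3 (fun t _ => ?_) measurableSet_Ioc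
  field_simp

lemma Gamma_mul_le {c x y : ℝ} (hc : 0 < c) (hx : c ≤ x) (hy : c ≤ y) :
    Real.Gamma x * Real.Gamma y
      ≤ (Real.Gamma c * Real.Gamma c / Real.Gamma (c+c)) * Real.Gamma (x+y) := by
  have hx0 : 0 < x := hc.trans_le hx
  have hy0 : 0 < y := hc.trans_le hy
  have hmono : ∫ t in Set.Ioc (0:ℝ) 1, t ^ (x-1) * (1-t) ^ (y-1)
      ≤ ∫ t in Set.Ioc (0:ℝ) 1, t ^ (c-1) * (1-t) ^ (c-1) := by
    rw [integral_Ioc_eq_integral_Ioo, integral_Ioc_eq_integral_Ioo]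
    refine setIntegral_mono_on
      ((beta_integrableOn hx0 hy0).mono_set Ioo_subset_Ioc_self)
      ((beta_integrableOn hc hc).mono_set Ioo_subset_Ioc_self)
      measurableSet_Ioo (fun t ht => ?_)
    have h1 : (0:ℝ) < t := ht.1
    have h2 : (0:ℝ) < 1 - t := by linarith [ht.2]
    exact mul_le_mul (Real.rpow_le_rpow_of_exponent_ge h1 ht.2.le (by linarith))
      (Real.rpow_le_rpow_of_exponent_ge h2 (by linarith) (by linarith))
      (Real.rpow_nonneg h2.le _) (Real.rpow_nonneg h1.le _)
  rw [beta_integral_eq hx0 hy0, beta_integral_eq hc hc] at hmono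
  have hxy : 0 < Real.Gamma (x+y) := Real.Gamma_pos_of_pos (by linarith)
  have hcc : 0 < Real.Gamma (c+c) := Real.Gamma_pos_of_pos (by linarith)
  rw [div_le_div_iff₀ hxy hcc] at hmono
  calc Real.Gamma x * Real.Gamma y
      = (Real.Gamma x * Real.Gamma y * Real.Gamma (c+c)) / Real.Gamma (c+c) := by
        field_simp
    _ ≤ (Real.Gamma c * Real.Gamma c * Real.Gamma (x+y)) / Real.Gamma (c+c) :=
        div_le_div_of_nonneg_right hmono hcc.le |>.trans_eq rfl
    _ = (Real.Gamma c * Real.Gamma c / Real.Gamma (c+c)) * Real.Gamma (x+y) := by ring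

noncomputable def calS (p φ : ℝ) (k : ℕ) : ℝ :=
  ∑ n ∈ Finset.range (k + 1),
    Real.Gamma ((2 * (n : ℝ) + 1) / p) * Real.Gamma ((2 * ((k - n : ℕ) : ℝ) + 1) / p) /
        ((Nat.factorial (2 * n) : ℝ) * (Nat.factorial (2 * (k - n)) : ℝ)) *
      (|Real.cos φ| ^ (4 * (n : ℝ) / p) * |Real.sin φ| ^ (4 * ((k - n : ℕ) : ℝ) / p))

lemma calS_nonneg {p : ℝ} (hp : 0 < p) (φ : ℝ) (k : ℕ) : 0 ≤ calS p φ k := by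
  refine Finset.sum_nonneg (fun n _ => ?_)
  have g1 : 0 < Real.Gamma ((2 * (n : ℝ) + 1) / p) :=
    Real.Gamma_pos_of_pos (by positivity)
  have g2 : 0 < Real.Gamma ((2 * ((k - n : ℕ) : ℝ) + 1) / p) :=
    Real.Gamma_pos_of_pos (by positivity)
  positivity

lemma fact_bound {k n : ℕ} (hn : n ≤ k) :
    ((2*k).factorial : ℝ) ≤ 4^k * ((2*n).factorial * (2*(k-n)).factorial) := by
  have h1 : (2*k).choose (2*n) * (2*n).factorial * (2*k - 2*n).factorial = (2*k).factorial :=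
    Nat.choose_mul_factorial_mul_factorial (by omega)
  have h2 : 2*k - 2*n = 2*(k-n) := by omega
  have h3 : (2*k).choose (2*n) ≤ 4^k := by
    calc (2*k).choose (2*n) ≤ ∑ i ∈ Finset.range (2*k+1), (2*k).choose i :=
          Finset.single_le_sum (f := fun i => (2*k).choose i) (fun i _ => Nat.zero_le _)
            (Finset.mem_range.mpr (by omega))
      _ = 2^(2*k) := Nat.sum_range_choose (2*k)
      _ = 4^k := by rw [pow_mul]; norm_num
  rw [h2] at h1
  have : (2*k).factorial ≤ 4^k * ((2*n).factorial * (2*(k-n)).factorial) := by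
    calc (2*k).factorial = (2*k).choose (2*n) * (2*n).factorial * (2*(k-n)).factorial := h1.symm
      _ ≤ 4^k * (2*n).factorial * (2*(k-n)).factorial :=
          Nat.mul_le_mul_right _ (Nat.mul_le_mul_right _ h3)
      _ = 4^k * ((2*n).factorial * (2*(k-n)).factorial) := by ring
  exact_mod_cast this

lemma calS_le {p : ℝ} (hp : 0 < p) (φ : ℝ) (k : ℕ) :
    calS p φ k ≤ (Real.Gamma (1/p) * Real.Gamma (1/p) / Real.Gamma (1/p + 1/p)) *
      Real.Gamma ((2/p) * ((k:ℝ)+1)) * (((k:ℝ)+1) * 4^k / (Nat.factorial (2*k) : ℝ)) := by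
  have hD : 0 ≤ Real.Gamma (1/p) * Real.Gamma (1/p) / Real.Gamma (1/p + 1/p) := by
    have := Real.Gamma_pos_of_pos (show (0:ℝ) < 1/p by positivity)
    have := Real.Gamma_pos_of_pos (show (0:ℝ) < 1/p + 1/p by positivity)
    positivity
  have key : ∀ n ∈ Finset.range (k+1),
      Real.Gamma ((2 * (n : ℝ) + 1) / p) * Real.Gamma ((2 * ((k - n : ℕ) : ℝ) + 1) / p) /
          ((Nat.factorial (2 * n) : ℝ) * (Nat.factorial (2 * (k - n)) : ℝ)) *
        (|Real.cos φ| ^ (4 * (n : ℝ) / p) * |Real.sin φ| ^ (4 * ((k - n : ℕ) : ℝ) / p))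
      ≤ (Real.Gamma (1/p) * Real.Gamma (1/p) / Real.Gamma (1/p + 1/p)) *
          Real.Gamma ((2/p) * ((k:ℝ)+1)) * (4^k / (Nat.factorial (2*k) : ℝ)) := by
    intro n hn
    have hnk : n ≤ k := by simpa using Nat.lt_succ_iff.mp (Finset.mem_range.mp hn)
    have hcast : ((k - n : ℕ) : ℝ) = (k : ℝ) - (n : ℝ) := by
      push_cast [Nat.cast_sub hnk]; ring
    have g1 : 0 < Real.Gamma ((2 * (n : ℝ) + 1) / p) := Real.Gamma_pos_of_pos (by positivity)
    have g2 : 0 < Real.Gamma ((2 * ((k - n : ℕ) : ℝ) + 1) / p) :=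
      Real.Gamma_pos_of_pos (by positivity)
    have htrig : |Real.cos φ| ^ (4 * (n : ℝ) / p) * |Real.sin φ| ^ (4 * ((k - n : ℕ) : ℝ) / p)
        ≤ 1 := by
      have h1 : |Real.cos φ| ^ (4 * (n : ℝ) / p) ≤ 1 :=
        Real.rpow_le_one (abs_nonneg _) (abs_cos_le_one φ) (by positivity)
      have h2 : |Real.sin φ| ^ (4 * ((k - n : ℕ) : ℝ) / p) ≤ 1 :=
        Real.rpow_le_one (abs_nonneg _) (abs_sin_le_one φ) (by positivity)
      exact mul_le_one₀ h1 (Real.rpow_nonneg (abs_nonneg _) _) h2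
    have hGG : Real.Gamma ((2 * (n : ℝ) + 1) / p) * Real.Gamma ((2 * ((k - n : ℕ) : ℝ) + 1) / p)
        ≤ (Real.Gamma (1/p) * Real.Gamma (1/p) / Real.Gamma (1/p + 1/p)) *
          Real.Gamma ((2/p) * ((k:ℝ)+1)) := by
      have := Gamma_mul_le (show (0:ℝ) < 1/p by positivity)
        (show 1/p ≤ (2 * (n : ℝ) + 1) / p by
          apply div_le_div_of_nonneg_right ?_ hp.le |>.trans_eq rfl
          have : (0:ℝ) ≤ (n:ℝ) := Nat.cast_nonneg n
          linarith)
        (show 1/p ≤ (2 * ((k - n : ℕ) : ℝ) + 1) / p by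
          apply div_le_div_of_nonneg_right ?_ hp.le |>.trans_eq rfl
          have : (0:ℝ) ≤ ((k-n:ℕ):ℝ) := Nat.cast_nonneg _
          linarith)
      convert this using 3
      rw [hcast]; ring
    have hfac : ((Nat.factorial (2 * n) : ℝ) * (Nat.factorial (2 * (k - n)) : ℝ))⁻¹
        ≤ 4^k / (Nat.factorial (2*k) : ℝ) := by
      rw [inv_eq_one_div, div_le_div_iff₀ (by positivity) (by positivity), one_mul]
      exact fact_bound hnk
    calc _ ≤ Real.Gamma ((2 * (n : ℝ) + 1) / p) * Real.Gamma ((2 * ((k - n : ℕ) : ℝ) + 1) / p) /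
          ((Nat.factorial (2 * n) : ℝ) * (Nat.factorial (2 * (k - n)) : ℝ)) * 1 := by
          apply mul_le_mul_of_nonneg_left htrig (by positivity)
      _ = (Real.Gamma ((2 * (n : ℝ) + 1) / p) * Real.Gamma ((2 * ((k - n : ℕ) : ℝ) + 1) / p)) *
          ((Nat.factorial (2 * n) : ℝ) * (Nat.factorial (2 * (k - n)) : ℝ))⁻¹ := by
          rw [mul_one, div_eq_mul_inv]
      _ ≤ ((Real.Gamma (1/p) * Real.Gamma (1/p) / Real.Gamma (1/p + 1/p)) *
          Real.Gamma ((2/p) * ((k:ℝ)+1))) * (4^k / (Nat.factorial (2*k) : ℝ)) := by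
          apply mul_le_mul hGG hfac (by positivity)
          have := Real.Gamma_pos_of_pos (show (0:ℝ) < (2/p)*((k:ℝ)+1) by positivity)
          positivity
      _ = _ := by ring
  calc calS p φ k ≤ ∑ n ∈ Finset.range (k+1),
        (Real.Gamma (1/p) * Real.Gamma (1/p) / Real.Gamma (1/p + 1/p)) *
          Real.Gamma ((2/p) * ((k:ℝ)+1)) * (4^k / (Nat.factorial (2*k) : ℝ)) :=
        Finset.sum_le_sum key
    _ = (((k:ℝ))+1) * ((Real.Gamma (1/p) * Real.Gamma (1/p) / Real.Gamma (1/p + 1/p)) *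
          Real.Gamma ((2/p) * ((k:ℝ)+1)) * (4^k / (Nat.factorial (2*k) : ℝ))) := by
        rw [Finset.sum_const, Finset.card_range]
        push_cast
        ring
    _ = _ := by ring

lemma aux_summable {x : ℝ} (hx : 0 ≤ x) :
    Summable (fun k : ℕ => ((k:ℝ)+1) * x^k / (Nat.factorial (2*k) : ℝ)) := by
  refine Summable.of_nonneg_of_le (fun k => by positivity) (fun k => ?_)
    ((Real.summable_pow_div_factorial (2*x)).mul_left 2)
  have h1 : ((k:ℝ)+1) ≤ 2 * 2^k := by
    have : (k:ℕ) < 2^k := Nat.lt_two_pow_self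
    have : ((k:ℝ)) < 2^k := by exact_mod_cast this
    have h2 : (1:ℝ) ≤ 2^k := one_le_pow₀ one_le_two
    linarith
  have h2 : (Nat.factorial k : ℝ) ≤ (Nat.factorial (2*k) : ℝ) := by
    exact_mod_cast Nat.factorial_le (by omega)
  calc ((k:ℝ)+1) * x^k / (Nat.factorial (2*k) : ℝ)
      ≤ (2 * (2*x)^k) / (Nat.factorial k : ℝ) := by
        apply div_le_div₀ (by positivity) ?_ (by positivity) h2
        rw [mul_pow]
        calc ((k:ℝ)+1) * x^k ≤ (2 * 2^k) * x^k :=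
              mul_le_mul_of_nonneg_right h1 (by positivity)
          _ = 2 * (2^k * x^k) := by ring
    _ = 2 * ((2*x)^k / (Nat.factorial k : ℝ)) := by ring

lemma summable_master {p w r D1 : ℝ} (hp : 0 < p) (hw : 0 < w) (hr : 0 ≤ r) (hD1 : 0 ≤ D1)
    (S : ℕ → ℝ) (hS0 : ∀ k, 0 ≤ S k)
    (hS : ∀ k, S k ≤ D1 * Real.Gamma ((2/p) * ((k:ℝ)+1)) *
      (((k:ℝ)+1) * 4^k / (Nat.factorial (2*k) : ℝ))) :
    Summable (fun k : ℕ => r^(2*k) * S k / Real.Gamma ((2/p) * ((k:ℝ)+1) + w)) := by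
  set c := min (2/p) w with hcdef
  have hc : 0 < c := lt_min (by positivity) hw
  set D2 := Real.Gamma c * Real.Gamma c / Real.Gamma (c+c) with hD2def
  have hw' : 0 < Real.Gamma w := Real.Gamma_pos_of_pos hw
  have hD2 : 0 < D2 := by
    have := Real.Gamma_pos_of_pos hc
    have := Real.Gamma_pos_of_pos (by linarith : (0:ℝ) < c + c)
    positivity
  refine Summable.of_nonneg_of_le (fun k => ?_) (fun k => ?_)
    ((aux_summable (by positivity : (0:ℝ) ≤ 4*r^2)).mul_left (D1*D2/Real.Gamma w))
  · have := Real.Gamma_pos_of_pos (show (0:ℝ) < (2/p) * ((k:ℝ)+1) + w by positivity)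
    have := hS0 k
    positivity
  · set A := (2/p) * ((k:ℝ)+1) with hAdef
    have hApos : 0 < A := by positivity
    have hA : 0 < Real.Gamma A := Real.Gamma_pos_of_pos hApos
    have hB : 0 < Real.Gamma (A + w) := Real.Gamma_pos_of_pos (by positivity)
    have hcA : c ≤ A := by
      calc c ≤ 2/p := min_le_left _ _
        _ ≤ A := le_mul_of_one_le_right (by positivity) (by
            have : (0:ℝ) ≤ (k:ℝ) := Nat.cast_nonneg k
            linarith)
    have hratio : Real.Gamma A / Real.Gamma (A + w) ≤ D2 / Real.Gamma w := by
      rw [div_le_div_iff₀ hB hw']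
      exact Gamma_mul_le hc hcA (min_le_right _ _)
    have hk1 : (0:ℝ) ≤ (k:ℝ)+1 := by positivity
    calc r^(2*k) * S k / Real.Gamma (A + w)
        ≤ r^(2*k) * (D1 * Real.Gamma A * (((k:ℝ)+1) * 4^k / (Nat.factorial (2*k) : ℝ)))
            / Real.Gamma (A + w) := by
          apply div_le_div_of_nonneg_right ?_ hB.le |>.trans_eq rfl
          exact mul_le_mul_of_nonneg_left (hS k) (by positivity)
      _ = (Real.Gamma A / Real.Gamma (A + w)) *
            (D1 * (r^2)^k * (((k:ℝ)+1) * 4^k / (Nat.factorial (2*k) : ℝ))) := by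
          rw [pow_mul]
          field_simp
      _ ≤ (D2 / Real.Gamma w) *
            (D1 * (r^2)^k * (((k:ℝ)+1) * 4^k / (Nat.factorial (2*k) : ℝ))) := by
          exact mul_le_mul_of_nonneg_right hratio (by positivity)
      _ = (D1*D2/Real.Gamma w) * (((k:ℝ)+1) * (4*r^2)^k / (Nat.factorial (2*k) : ℝ)) := by
          rw [mul_pow]
          field_simp



lemma calJ_eq (p ω φ r : ℝ) :
    calJ p ω φ r = ((2 / p) ^ 2 / Real.Gamma (1 / p) ^ 2) *
      ∑' k : ℕ, (p ^ (2 * k) * (-1 : ℝ) ^ k / Real.Gamma ((2 / p) * ((k : ℝ) + 1) + ω)) *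
        (r / p) ^ (2 * (k : ℝ) + ω) * calS p φ k := rfl

theorem calJ_integral_recursion (p ω γ φ r : ℝ) (hp : 0 < p)
    (hq : ∃ q : ℕ, (q : ℝ) = 2 / p) (hω : 0 ≤ ω) (hγ : 0 < γ)
    (hφ : φ ∈ Set.Ico 0 (2 * Real.pi)) (hr : 0 < r) :
    calJ p (ω + γ) φ r =
      r ^ γ / (p ^ (γ - 1) * Real.Gamma γ) *
        ∫ τ in (0 : ℝ)..1,
          calJ p ω φ (τ * r) * τ ^ ((p - 1) * ω + 1) * (1 - τ ^ p) ^ (γ - 1) := by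
  have hrp : (0:ℝ) < r / p := by positivity
  have hC : (0:ℝ) < (2 / p) ^ 2 / Real.Gamma (1 / p) ^ 2 := by
    have := Real.Gamma_pos_of_pos (show (0:ℝ) < 1/p by positivity)
    positivity
  set C : ℝ := (2 / p) ^ 2 / Real.Gamma (1 / p) ^ 2 with hCdef
  set A : ℕ → ℝ := fun k => (2/p) * ((k:ℝ)+1) + ω with hA
  have hApos : ∀ k : ℕ, 0 < A k := by
    intro k
    have h1 : (0:ℝ) < (2/p) * ((k:ℝ)+1) := by positivity
    simp only [hA]; linarith
  have hGA : ∀ k : ℕ, 0 < Real.Gamma (A k) := fun k => Real.Gamma_pos_of_pos (hApos k)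
  have hGAγ : ∀ k : ℕ, 0 < Real.Gamma (A k + γ) :=
    fun k => Real.Gamma_pos_of_pos (by linarith [hApos k])
  have hGγ : 0 < Real.Gamma γ := Real.Gamma_pos_of_pos hγ
  set c : ℕ → ℝ := fun k =>
    C * (p ^ (2*k) * (-1:ℝ)^k / Real.Gamma (A k)) * (r/p) ^ (2*(k:ℝ)+ω) * calS p φ k with hc
  set f : ℕ → ℝ → ℝ := fun k τ => c k * (τ ^ (2*(k:ℝ)+p*ω+1) * (1-τ^p) ^ (γ-1)) with hf
  have hexp : ∀ k : ℕ, 2*(k:ℝ)+p*ω+1 = p * A k - 1 := by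
    intro k; simp only [hA]; field_simp; ring
  -- integrand rewriting
  have hinteg : ∀ τ ∈ Set.Ioc (0:ℝ) 1,
      calJ p ω φ (τ * r) * τ ^ ((p - 1) * ω + 1) * (1 - τ ^ p) ^ (γ - 1)
        = ∑' k : ℕ, f k τ := by
    intro τ hτ
    have hτ0 : (0:ℝ) < τ := hτ.1
    rw [calJ_eq]
    rw [show τ * r / p = τ * (r/p) by ring]
    have hT : ∀ T w1 w2 : ℝ, (C * T) * w1 * w2 = T * (C * w1 * w2) := by intros; ring
    rw [hT, ← tsum_mul_right]
    refine tsum_congr fun k => ?_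
    simp only [hf, hc, hA]
    rw [Real.mul_rpow hτ0.le hrp.le]
    have e : τ ^ (2*(k:ℝ)+p*ω+1) = τ ^ (2*(k:ℝ)+ω) * τ ^ ((p-1)*ω+1) := by
      rw [← Real.rpow_add hτ0]; congr 1; ring
    rw [e]
    ring
  -- integrability
  have hbint : ∀ k : ℕ,
      IntegrableOn (fun τ => τ ^ (2*(k:ℝ)+p*ω+1) * (1-τ^p) ^ (γ-1)) (Set.Ioc (0:ℝ) 1) := by
    intro k
    rw [hexp k]
    exact rpow_beta_integrableOn hp (hApos k) hγ
  have hfint : ∀ k : ℕ, Integrable (f k) (volume.restrict (Set.Ioc (0:ℝ) 1)) := by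
    intro k
    simp only [hf]
    exact (hbint k).const_mul (c k)
  -- value of the beta-type integral
  have hgval : ∀ k : ℕ, ∫ τ in Set.Ioc (0:ℝ) 1, τ ^ (2*(k:ℝ)+p*ω+1) * (1-τ^p) ^ (γ-1)
      = Real.Gamma (A k) * Real.Gamma γ / (p * Real.Gamma (A k + γ)) := by
    intro k
    rw [hexp k]
    exact rpow_beta_integral hp (hApos k) hγ
  -- norm of c k
  have habs : ∀ k : ℕ, |c k| = C * (p ^ (2*k) / Real.Gamma (A k)) * (r/p) ^ (2*(k:ℝ)+ω)
      * calS p φ k := by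
    intro k
    rw [hc]
    rw [abs_mul, abs_mul, abs_mul, abs_of_pos hC,
      abs_of_pos (Real.rpow_pos_of_pos hrp _), abs_of_nonneg (calS_nonneg hp φ k),
      abs_div, abs_mul, abs_pow, abs_pow, abs_neg, abs_one, one_pow, mul_one,
      abs_of_pos hp, abs_of_pos (hGA k)]
  -- the summable majorant
  have hSum : Summable (fun k : ℕ =>
      r^(2*k) * calS p φ k / Real.Gamma ((2/p) * ((k:ℝ)+1) + (ω+γ))) := by
    refine summable_master hp (by linarith) hr.le ?_ _ (calS_nonneg hp φ) (calS_le hp φ)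
    have h1 := Real.Gamma_pos_of_pos (show (0:ℝ) < 1/p by positivity)
    have h2 := Real.Gamma_pos_of_pos (show (0:ℝ) < 1/p + 1/p by positivity)
    positivity
  have hSum' : Summable (fun k : ℕ => r^(2*k) * calS p φ k / Real.Gamma (A k + γ)) := by
    refine hSum.congr fun k => ?_
    simp only [hA]
    rw [add_assoc]
  -- equality |c k| * I k = M * term k
  set M : ℝ := C * (r/p) ^ ω * Real.Gamma γ / p with hM
  have hMpos : 0 < M := by
    have := Real.rpow_pos_of_pos hrp ω
    simp only [hM]; positivity
  have hckIk : ∀ k : ℕ,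
      |c k| * (Real.Gamma (A k) * Real.Gamma γ / (p * Real.Gamma (A k + γ)))
        = M * (r^(2*k) * calS p φ k / Real.Gamma (A k + γ)) := by
    intro k
    rw [habs k]
    have e1 : (r/p) ^ (2*(k:ℝ)+ω) = (r/p) ^ (2*k : ℕ) * (r/p) ^ ω := by
      rw [Real.rpow_add hrp]
      congr 1
      rw [← Real.rpow_natCast (r/p) (2*k)]
      congr 1
      push_cast; ring
    have e2 : (p:ℝ) ^ (2*k) * (r/p) ^ (2*k) = r ^ (2*k) := by
      rw [← mul_pow]
      congr 1
      field_simp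
    rw [e1, hM, ← e2]
    have h1 : Real.Gamma (A k) ≠ 0 := (hGA k).ne'
    have h2 : Real.Gamma (A k + γ) ≠ 0 := (hGAγ k).ne'
    field_simp
  -- finiteness of the lintegral sum
  have hnorm : ∀ k : ℕ, ∫⁻ τ, ‖f k τ‖₊ ∂(volume.restrict (Set.Ioc (0:ℝ) 1))
      = ENNReal.ofReal (M * (r^(2*k) * calS p φ k / Real.Gamma (A k + γ))) := by
    intro k
    change ∫⁻ τ, ‖f k τ‖ₑ ∂(volume.restrict (Set.Ioc (0:ℝ) 1)) = _
    rw [← ofReal_integral_norm_eq_lintegral_enorm (hfint k), ← hckIk k]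
    congr 1
    have : ∫ τ in Set.Ioc (0:ℝ) 1, ‖f k τ‖
        = ∫ τ in Set.Ioc (0:ℝ) 1, |c k| * (τ ^ (2*(k:ℝ)+p*ω+1) * (1-τ^p) ^ (γ-1)) := by
      refine setIntegral_congr_fun measurableSet_Ioc fun τ hτ => ?_
      have h1 : (0:ℝ) ≤ τ ^ (2*(k:ℝ)+p*ω+1) := Real.rpow_nonneg hτ.1.le _
      have h2 : (0:ℝ) ≤ (1-τ^p) ^ (γ-1) := by
        refine Real.rpow_nonneg ?_ _
        have := Real.rpow_le_one hτ.1.le hτ.2 hp.le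
        linarith
      simp only [hf, Real.norm_eq_abs, abs_mul]
      rw [abs_of_nonneg h1, abs_of_nonneg h2]
    rw [this, MeasureTheory.integral_const_mul, hgval k]
  have hfin : ∑' k : ℕ, ∫⁻ τ, ‖f k τ‖₊ ∂(volume.restrict (Set.Ioc (0:ℝ) 1)) ≠ ⊤ := by
    rw [tsum_congr hnorm]
    rw [← ENNReal.ofReal_tsum_of_nonneg]
    · exact ENNReal.ofReal_ne_top
    · intro k
      have h1 := calS_nonneg hp φ k
      have h2 := (hGAγ k).le
      positivity
    · exact hSum'.mul_left M
  have hmeas : ∀ k : ℕ, AEStronglyMeasurable (f k) (volume.restrict (Set.Ioc (0:ℝ) 1)) :=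
    fun k => (hfint k).aestronglyMeasurable
  -- main computation
  rw [intervalIntegral.integral_of_le zero_le_one,
    setIntegral_congr_fun measurableSet_Ioc hinteg,
    MeasureTheory.integral_tsum hmeas hfin]
  have hval : ∀ k : ℕ, ∫ τ in Set.Ioc (0:ℝ) 1, f k τ
      = c k * (Real.Gamma (A k) * Real.Gamma γ / (p * Real.Gamma (A k + γ))) := by
    intro k
    simp only [hf]
    rw [MeasureTheory.integral_const_mul, hgval k]
  rw [tsum_congr hval, calJ_eq, ← tsum_mul_left, ← tsum_mul_left]
  refine tsum_congr fun k => ?_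
  simp only [hc, hA]
  have e3 : (r/p) ^ (2*(k:ℝ)+(ω+γ)) = (r/p) ^ (2*(k:ℝ)+ω) * (r/p) ^ γ := by
    rw [← Real.rpow_add hrp]; congr 1; ring
  have e4 : (p:ℝ) ^ (γ-1) = p ^ γ / p := by
    rw [Real.rpow_sub hp, Real.rpow_one]
  have e5 : ((r/p):ℝ) ^ γ = r ^ γ / p ^ γ := Real.div_rpow hr.le hp.le γ
  have harg : (2/p) * ((k:ℝ)+1) + (ω+γ) = (2/p) * ((k:ℝ)+1) + ω + γ := by ring
  have hpγ : (0:ℝ) < p ^ γ := Real.rpow_pos_of_pos hp γ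
  have hG1 : Real.Gamma ((2/p) * ((k:ℝ)+1) + ω) ≠ 0 := by
    have := hGA k; simp only [hA] at this; exact this.ne'
  have hG2 : Real.Gamma ((2/p) * ((k:ℝ)+1) + ω + γ) ≠ 0 := by
    have := hGAγ k; simp only [hA] at this; exact this.ne'
  rw [harg, e3, e5, e4, ← hCdef]
  set G1 := Real.Gamma ((2/p) * ((k:ℝ)+1) + ω) with hG1def
  set G2 := Real.Gamma ((2/p) * ((k:ℝ)+1) + ω + γ) with hG2def
  set X := (r/p) ^ (2*(k:ℝ)+ω) with hXdef
  field_simp
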